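/- Let φ be an LTL formula and w an infinite word. Let G be the set of G-subformulas Gψ of φ such that w ⊨ FGψ, and for Gψ ∈ G let ind(w,ψ) be the smallest index j such that w_j ⊨ Gψ. Then w ⊨ φ if and only if for almost every i ∈ ℕ: ⋀_{Gψ∈G}(Gψ ∧ ⋀_{j=ind(w,ψ)}^{i} afG(ψ, w[j..i])) ∧ ⋀_{Gψ∈GG(φ)\G} ¬Gψ propositionally implies af(φ, w[0..i]). -/

import Mathlib

namespace LTLF

/-- LTL formulas in negation normal form over atomic propositions `Ap`. -/
inductive LTL (Ap : Type) : Type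
  | tt : LTL Ap
  | ff : LTL Ap
  | atom : Ap → LTL Ap
  | natom : Ap → LTL Ap
  | and : LTL Ap → LTL Ap → LTL Ap
  | or : LTL Ap → LTL Ap → LTL Ap
  | next : LTL Ap → LTL Ap
  | fut : LTL Ap → LTL Ap
  | glob : LTL Ap → LTL Ap
  | untl : LTL Ap → LTL Ap → LTL Ap

variable {Ap : Type}

/-- Infinite words over the alphabet `2^Ap`. -/
abbrev Word (Ap : Type) := ℕ → Set Ap

/-- The suffix `w_k`. -/
def suffix (w : Word Ap) (k : ℕ) : Word Ap := fun i => w (i + k)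

/-- Standard LTL semantics on infinite words. -/
def Sat : LTL Ap → Word Ap → Prop
  | .tt, _ => True
  | .ff, _ => False
  | .atom a, w => a ∈ w 0
  | .natom a, w => a ∉ w 0
  | .and φ ψ, w => Sat φ w ∧ Sat ψ w
  | .or φ ψ, w => Sat φ w ∨ Sat ψ w
  | .next φ, w => Sat φ (suffix w 1)
  | .fut φ, w => ∃ k, Sat φ (suffix w k)
  | .glob φ, w => ∀ k, Sat φ (suffix w k)
  | .untl φ ψ, w => ∃ k, Sat ψ (suffix w k) ∧ ∀ j < k, Sat φ (suffix w j)

open Classical in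
/-- The "after function" `af(φ, ν)`. -/
noncomputable def af : LTL Ap → Set Ap → LTL Ap
  | .tt, _ => .tt
  | .ff, _ => .ff
  | .atom a, ν => if a ∈ ν then .tt else .ff
  | .natom a, ν => if a ∈ ν then .ff else .tt
  | .and φ ψ, ν => .and (af φ ν) (af ψ ν)
  | .or φ ψ, ν => .or (af φ ν) (af ψ ν)
  | .next φ, _ => φ
  | .fut φ, ν => .or (af φ ν) (.fut φ)
  | .glob φ, ν => .and (af φ ν) (.glob φ)
  | .untl φ ψ, ν => .or (af ψ ν) (.and (af φ ν) (.untl φ ψ))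

/-- `af` extended to finite words. -/
noncomputable def afw (φ : LTL Ap) (u : List (Set Ap)) : LTL Ap := u.foldl af φ

open Classical in
/-- The variant `afG`, identical to `af` except `afG(Gφ, ν) = Gφ`. -/
noncomputable def afG : LTL Ap → Set Ap → LTL Ap
  | .tt, _ => .tt
  | .ff, _ => .ff
  | .atom a, ν => if a ∈ ν then .tt else .ff
  | .natom a, ν => if a ∈ ν then .ff else .tt
  | .and φ ψ, ν => .and (afG φ ν) (afG ψ ν)
  | .or φ ψ, ν => .or (afG φ ν) (afG ψ ν)
  | .next φ, _ => φ
  | .fut φ, ν => .or (afG φ ν) (.fut φ)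
  | .glob φ, _ => .glob φ
  | .untl φ ψ, ν => .or (afG ψ ν) (.and (afG φ ν) (.untl φ ψ))

/-- `afG` extended to finite words. -/
noncomputable def afGw (φ : LTL Ap) (u : List (Set Ap)) : LTL Ap := u.foldl afG φ

/-- The finite infix `w[i..j] = w[i] w[i+1] ⋯ w[j]`. -/
def infixW (w : Word Ap) (i j : ℕ) : List (Set Ap) :=
  (List.range (j + 1 - i)).map (fun k => w (i + k))

/-- The finite prefix `w[0..i]`. -/
def prefixW (w : Word Ap) (i : ℕ) : List (Set Ap) := infixW w 0 i

/-- Concatenation of a finite word with an infinite word. -/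
def cat (u : List (Set Ap)) (w : Word Ap) : Word Ap :=
  fun k => if h : k < u.length then u.get ⟨k, h⟩ else w (k - u.length)

/-- Propositional evaluation of a formula under a valuation `v`, treating
literals and temporal formulas (`X`, `F`, `G`, `U`) as opaque propositional atoms. -/
def propSat (v : LTL Ap → Prop) : LTL Ap → Prop
  | .tt => True
  | .ff => False
  | .and φ ψ => propSat v φ ∧ propSat v ψ
  | .or φ ψ => propSat v φ ∨ propSat v ψ
  | φ => v φ

/-- A valuation is consistent on literals: `a` and `¬a` get complementary values. -/
def LitConsistent (v : LTL Ap → Prop) : Prop :=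
  ∀ a : Ap, v (.atom a) ↔ ¬ v (.natom a)

/-- Propositional implication `φ ⊨_p ψ`. -/
def PropImp (φ ψ : LTL Ap) : Prop :=
  ∀ v : LTL Ap → Prop, LitConsistent v → propSat v φ → propSat v ψ

/-- Propositional equivalence `φ ≡_p ψ`. -/
def PropEquiv (φ ψ : LTL Ap) : Prop :=
  ∀ v : LTL Ap → Prop, LitConsistent v → (propSat v φ ↔ propSat v ψ)

/-- `⋀_{χ ∈ H} χ ⊨_p ψ` : the (possibly infinite) conjunction of the
hypotheses `H` propositionally implies `ψ`. -/
def PropImpSet (H : Set (LTL Ap)) (ψ : LTL Ap) : Prop :=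
  ∀ v : LTL Ap → Prop, LitConsistent v → (∀ χ ∈ H, propSat v χ) → propSat v ψ

/-- The list of subformulas of a formula. -/
def subfs : LTL Ap → List (LTL Ap)
  | .tt => [.tt]
  | .ff => [.ff]
  | .atom a => [.atom a]
  | .natom a => [.natom a]
  | .and φ ψ => .and φ ψ :: (subfs φ ++ subfs ψ)
  | .or φ ψ => .or φ ψ :: (subfs φ ++ subfs ψ)
  | .next φ => .next φ :: subfs φ
  | .fut φ => .fut φ :: subfs φ
  | .glob φ => .glob φ :: subfs φ
  | .untl φ ψ => .untl φ ψ :: (subfs φ ++ subfs ψ)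

/-- `Gψ` is a `G`-subformula of `φ`. -/
def GSub (φ ψ : LTL Ap) : Prop := LTL.glob ψ ∈ subfs φ

/-- A formula is `G`-free if it contains no occurrence of `G`. -/
def GFree : LTL Ap → Prop
  | .glob _ => False
  | .and φ ψ => GFree φ ∧ GFree ψ
  | .or φ ψ => GFree φ ∧ GFree ψ
  | .next φ => GFree φ
  | .fut φ => GFree φ
  | .untl φ ψ => GFree φ ∧ GFree ψ
  | _ => True

/-- `ind(w, ψ)`: the least index `j` with `w_j ⊨ Gψ`. -/
noncomputable def ind (w : Word Ap) (ψ : LTL Ap) : ℕ :=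
  sInf {j | Sat (.glob ψ) (suffix w j)}

section Aux
variable {Ap : Type}

/-! ### basic word lemmas -/

lemma suffix_suffix (w : Word Ap) (j k : ℕ) : suffix (suffix w j) k = suffix w (k + j) := by
  funext i; simp [suffix, Nat.add_assoc]

lemma suffix_zero (w : Word Ap) : suffix w 0 = w := by funext i; simp [suffix]

lemma cat_cons_zero (ν : Set Ap) (u : List (Set Ap)) (w : Word Ap) : cat (ν :: u) w 0 = ν := by
  simp [cat]

lemma suffix_cat_cons (ν : Set Ap) (u : List (Set Ap)) (w : Word Ap) :
    suffix (cat (ν :: u) w) 1 = cat u w := by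
  funext k
  show cat (ν :: u) w (k + 1) = cat u w k
  simp only [cat, List.length_cons]
  by_cases h : k < u.length
  · rw [dif_pos (by omega), dif_pos h]
    rfl
  · rw [dif_neg (by omega), dif_neg h]
    exact congrArg w (by omega)

lemma cat_nil (w : Word Ap) : cat ([] : List (Set Ap)) w = w := by
  funext k; simp [cat]

/-! ### infix lemmas -/

lemma infixW_cons (w : Word Ap) {m i : ℕ} (h : m ≤ i) :
    infixW w m i = w m :: infixW w (m + 1) i := by
  unfold infixW
  have h1 : i + 1 - m = (i - m) + 1 := by omega
  have h2 : i + 1 - (m + 1) = i - m := by omega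
  have h3 : ((fun k => w (m + k)) ∘ Nat.succ) = (fun k => w (m + 1 + k)) := by
    funext k; exact congrArg w (by omega)
  rw [h1, h2, List.range_succ_eq_map, List.map_cons, List.map_map, h3, Nat.add_zero]

lemma infixW_empty (w : Word Ap) {m i : ℕ} (h : i < m) : infixW w m i = [] := by
  unfold infixW
  have : i + 1 - m = 0 := by omega
  rw [this]; rfl

lemma infixW_length (w : Word Ap) (m i : ℕ) : (infixW w m i).length = i + 1 - m := by
  simp [infixW]

lemma cat_infixW_suffix (w : Word Ap) {j i : ℕ} (h : j ≤ i + 1) :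
    cat (infixW w j i) (suffix w (i + 1)) = suffix w j := by
  funext k
  show cat _ _ k = w (k + j)
  unfold cat
  by_cases hk : k < (infixW w j i).length
  · rw [dif_pos hk]
    have hk' : k < i + 1 - j := by rwa [infixW_length] at hk
    simp only [infixW, List.get_eq_getElem, List.getElem_map, List.getElem_range]
    exact congrArg w (by omega)
  · rw [dif_neg hk]
    rw [infixW_length] at hk
    show w (k - (infixW w j i).length + (i + 1)) = w (k + j)
    rw [infixW_length]
    exact congrArg w (by omega)

end Aux

section Aux2
variable {Ap : Type}

/-! ### fold distribution lemmas -/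

lemma afw_cons (χ : LTL Ap) (ν : Set Ap) (u : List (Set Ap)) :
    afw χ (ν :: u) = afw (af χ ν) u := rfl

lemma afGw_cons (χ : LTL Ap) (ν : Set Ap) (u : List (Set Ap)) :
    afGw χ (ν :: u) = afGw (afG χ ν) u := rfl

lemma afw_nil (χ : LTL Ap) : afw χ [] = χ := rfl
lemma afGw_nil (χ : LTL Ap) : afGw χ [] = χ := rfl

lemma afw_tt (u : List (Set Ap)) : afw (.tt : LTL Ap) u = .tt := by
  induction u with
  | nil => rfl
  | cons ν u ih => simpa [afw_cons, af] using ih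

lemma afw_ff (u : List (Set Ap)) : afw (.ff : LTL Ap) u = .ff := by
  induction u with
  | nil => rfl
  | cons ν u ih => simpa [afw_cons, af] using ih

lemma afGw_tt (u : List (Set Ap)) : afGw (.tt : LTL Ap) u = .tt := by
  induction u with
  | nil => rfl
  | cons ν u ih => simpa [afGw_cons, afG] using ih

lemma afGw_ff (u : List (Set Ap)) : afGw (.ff : LTL Ap) u = .ff := by
  induction u with
  | nil => rfl
  | cons ν u ih => simpa [afGw_cons, afG] using ih

lemma afw_and (α β : LTL Ap) (u : List (Set Ap)) :
    afw (.and α β) u = .and (afw α u) (afw β u) := by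
  induction u generalizing α β with
  | nil => rfl
  | cons ν u ih => simp [afw_cons, af, ih]

lemma afw_or (α β : LTL Ap) (u : List (Set Ap)) :
    afw (.or α β) u = .or (afw α u) (afw β u) := by
  induction u generalizing α β with
  | nil => rfl
  | cons ν u ih => simp [afw_cons, af, ih]

lemma afGw_and (α β : LTL Ap) (u : List (Set Ap)) :
    afGw (.and α β) u = .and (afGw α u) (afGw β u) := by
  induction u generalizing α β with
  | nil => rfl
  | cons ν u ih => simp [afGw_cons, afG, ih]

lemma afGw_or (α β : LTL Ap) (u : List (Set Ap)) :
    afGw (.or α β) u = .or (afGw α u) (afGw β u) := by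
  induction u generalizing α β with
  | nil => rfl
  | cons ν u ih => simp [afGw_cons, afG, ih]

lemma afGw_glob (σ : LTL Ap) (u : List (Set Ap)) : afGw (.glob σ) u = .glob σ := by
  induction u with
  | nil => rfl
  | cons ν u ih => simpa [afGw_cons, afG] using ih

/-! ### propSat basics -/

lemma propSat_and (v : LTL Ap → Prop) (α β : LTL Ap) :
    propSat v (.and α β) ↔ propSat v α ∧ propSat v β := Iff.rfl

lemma propSat_or (v : LTL Ap → Prop) (α β : LTL Ap) :
    propSat v (.or α β) ↔ propSat v α ∨ propSat v β := Iff.rfl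

lemma propSat_tt (v : LTL Ap → Prop) : propSat v (.tt : LTL Ap) := trivial

lemma propSat_glob (v : LTL Ap → Prop) (σ : LTL Ap) :
    propSat v (.glob σ) ↔ v (.glob σ) := Iff.rfl

lemma propSat_sat (w' : Word Ap) : ∀ χ : LTL Ap,
    propSat (fun χ' => Sat χ' w') χ ↔ Sat χ w' := by
  intro χ
  induction χ with
  | and α β ihα ihβ => simp [propSat, Sat, ihα, ihβ]
  | or α β ihα ihβ => simp [propSat, Sat, ihα, ihβ]
  | _ => simp [propSat, Sat]

/-! ### semantics of af -/

lemma af_sem (χ : LTL Ap) (w'' : Word Ap) :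
    Sat (af χ (w'' 0)) (suffix w'' 1) ↔ Sat χ w'' := by
  induction χ with
  | tt => simp [af, Sat]
  | ff => simp [af, Sat]
  | atom a =>
      by_cases h : a ∈ w'' 0 <;> simp [af, h, Sat]
  | natom a =>
      by_cases h : a ∈ w'' 0 <;> simp [af, h, Sat]
  | and α β ihα ihβ => simp [af, Sat, ihα, ihβ]
  | or α β ihα ihβ => simp [af, Sat, ihα, ihβ]
  | next σ ih => simp [af, Sat]
  | fut σ ih =>
      show Sat (af σ (w'' 0)) (suffix w'' 1) ∨ (∃ k, Sat σ (suffix (suffix w'' 1) k)) ↔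
        ∃ k, Sat σ (suffix w'' k)
      constructor
      · rintro (h | ⟨k, hk⟩)
        · exact ⟨0, by rwa [suffix_zero, ← ih]⟩
        · rw [suffix_suffix] at hk
          exact ⟨k + 1, hk⟩
      · rintro ⟨k, hk⟩
        cases k with
        | zero => rw [suffix_zero] at hk; exact Or.inl (ih.2 hk)
        | succ k => exact Or.inr ⟨k, by rw [suffix_suffix]; exact hk⟩
  | glob σ ih =>
      show Sat (af σ (w'' 0)) (suffix w'' 1) ∧ (∀ k, Sat σ (suffix (suffix w'' 1) k)) ↔
        ∀ k, Sat σ (suffix w'' k)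
      constructor
      · rintro ⟨h0, h⟩ k
        cases k with
        | zero => rw [suffix_zero]; exact ih.1 h0
        | succ k => have := h k; rwa [suffix_suffix] at this
      · intro h
        refine ⟨ih.2 (by have := h 0; rwa [suffix_zero] at this), fun k => ?_⟩
        rw [suffix_suffix]; exact h (k + 1)
  | untl σ τ ihσ ihτ =>
      show Sat (af τ (w'' 0)) (suffix w'' 1) ∨
          (Sat (af σ (w'' 0)) (suffix w'' 1) ∧
            ∃ k, Sat τ (suffix (suffix w'' 1) k) ∧ ∀ j < k, Sat σ (suffix (suffix w'' 1) j)) ↔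
        ∃ k, Sat τ (suffix w'' k) ∧ ∀ j < k, Sat σ (suffix w'' j)
      constructor
      · rintro (h | ⟨h0, k, hk, hj⟩)
        · exact ⟨0, by rwa [suffix_zero, ← ihτ], by omega⟩
        · refine ⟨k + 1, by rw [suffix_suffix] at hk; exact hk, ?_⟩
          intro j hj'
          cases j with
          | zero => rw [suffix_zero]; exact ihσ.1 h0
          | succ j => have := hj j (by omega); rwa [suffix_suffix] at this
      · rintro ⟨k, hk, hj⟩
        cases k with
        | zero => rw [suffix_zero] at hk; exact Or.inl (ihτ.2 hk)
        | succ k =>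
            refine Or.inr ⟨ihσ.2 (by have := hj 0 (by omega); rwa [suffix_zero] at this),
              k, by rw [suffix_suffix]; exact hk, fun j hj' => ?_⟩
            rw [suffix_suffix]
            exact hj (j + 1) (by omega)

lemma afw_sem (u : List (Set Ap)) : ∀ (χ : LTL Ap) (w' : Word Ap),
    Sat (afw χ u) w' ↔ Sat χ (cat u w') := by
  induction u with
  | nil => intro χ w'; rw [afw_nil, cat_nil]
  | cons ν u ih =>
      intro χ w'
      rw [afw_cons, ih]
      have h0 : cat (ν :: u) w' 0 = ν := cat_cons_zero ν u w'
      have h1 : suffix (cat (ν :: u) w') 1 = cat u w' := suffix_cat_cons ν u w'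
      have h2 := af_sem χ (cat (ν :: u) w')
      rw [h0, h1] at h2
      exact h2

/-! ### semantics of afG (forward) -/

lemma afG_sem_fwd : ∀ χ : LTL Ap, ∀ w'' : Word Ap,
    Sat χ w'' → Sat (afG χ (w'' 0)) (suffix w'' 1) := by
  intro χ
  induction χ with
  | tt => intro w'' h; trivial
  | ff => intro w'' h; exact h.elim
  | atom a => intro w'' h; simp only [afG]; rw [if_pos (show a ∈ w'' 0 from h)]; trivial
  | natom a => intro w'' h; simp only [afG]; rw [if_neg (show a ∉ w'' 0 from h)]; trivial
  | and α β ihα ihβ => rintro w'' ⟨h1, h2⟩; exact ⟨ihα w'' h1, ihβ w'' h2⟩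
  | or α β ihα ihβ =>
      rintro w'' (h | h)
      · exact Or.inl (ihα w'' h)
      · exact Or.inr (ihβ w'' h)
  | next σ ih => intro w'' h; exact h
  | fut σ ih =>
      rintro w'' ⟨k, hk⟩
      cases k with
      | zero => rw [suffix_zero] at hk; exact Or.inl (ih w'' hk)
      | succ k =>
          refine Or.inr ⟨k, ?_⟩
          rw [suffix_suffix]; exact hk
  | glob σ ih =>
      intro w'' h k
      rw [suffix_suffix]
      exact h (k + 1)
  | untl σ τ ihσ ihτ =>
      rintro w'' ⟨k, hk, hj⟩
      cases k with
      | zero => rw [suffix_zero] at hk; exact Or.inl (ihτ w'' hk)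
      | succ k =>
          refine Or.inr ⟨ihσ w'' (by have := hj 0 (by omega); rwa [suffix_zero] at this),
            k, by rw [suffix_suffix]; exact hk, fun j hj' => ?_⟩
          rw [suffix_suffix]
          exact hj (j + 1) (by omega)

lemma afGw_sem_fwd (u : List (Set Ap)) : ∀ (χ : LTL Ap) (w' : Word Ap),
    Sat χ (cat u w') → Sat (afGw χ u) w' := by
  induction u with
  | nil => intro χ w' h; rwa [cat_nil] at h
  | cons ν u ih =>
      intro χ w' h
      rw [afGw_cons]
      apply ih
      have h1 := afG_sem_fwd χ (cat (ν :: u) w') h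
      rwa [cat_cons_zero, suffix_cat_cons] at h1

end Aux2

section Aux3
variable {Ap : Type}

lemma mem_subfs_self (χ : LTL Ap) : χ ∈ subfs χ := by
  cases χ <;> simp [subfs]

lemma subfs_trans : ∀ γ : LTL Ap, ∀ {β α : LTL Ap}, α ∈ subfs β → β ∈ subfs γ → α ∈ subfs γ := by
  intro γ
  induction γ with
  | and γ₁ γ₂ ih₁ ih₂ =>
      intro β α h1 h2
      simp only [subfs, List.mem_cons, List.mem_append] at h2 ⊢
      rcases h2 with rfl | h2 | h2
      · simp only [subfs, List.mem_cons, List.mem_append] at h1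
        tauto
      · exact Or.inr (Or.inl (ih₁ h1 h2))
      · exact Or.inr (Or.inr (ih₂ h1 h2))
  | or γ₁ γ₂ ih₁ ih₂ =>
      intro β α h1 h2
      simp only [subfs, List.mem_cons, List.mem_append] at h2 ⊢
      rcases h2 with rfl | h2 | h2
      · simp only [subfs, List.mem_cons, List.mem_append] at h1
        tauto
      · exact Or.inr (Or.inl (ih₁ h1 h2))
      · exact Or.inr (Or.inr (ih₂ h1 h2))
  | untl γ₁ γ₂ ih₁ ih₂ =>
      intro β α h1 h2
      simp only [subfs, List.mem_cons, List.mem_append] at h2 ⊢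
      rcases h2 with rfl | h2 | h2
      · simp only [subfs, List.mem_cons, List.mem_append] at h1
        tauto
      · exact Or.inr (Or.inl (ih₁ h1 h2))
      · exact Or.inr (Or.inr (ih₂ h1 h2))
  | next γ₁ ih =>
      intro β α h1 h2
      simp only [subfs, List.mem_cons] at h2 ⊢
      rcases h2 with rfl | h2
      · simp only [subfs, List.mem_cons] at h1
        tauto
      · exact Or.inr (ih h1 h2)
  | fut γ₁ ih =>
      intro β α h1 h2
      simp only [subfs, List.mem_cons] at h2 ⊢
      rcases h2 with rfl | h2
      · simp only [subfs, List.mem_cons] at h1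
        tauto
      · exact Or.inr (ih h1 h2)
  | glob γ₁ ih =>
      intro β α h1 h2
      simp only [subfs, List.mem_cons] at h2 ⊢
      rcases h2 with rfl | h2
      · simp only [subfs, List.mem_cons] at h1
        tauto
      · exact Or.inr (ih h1 h2)
  | tt =>
      intro β α h1 h2
      simp only [subfs, List.mem_cons, List.not_mem_nil, or_false] at h2
      subst h2
      simpa [subfs] using h1
  | ff =>
      intro β α h1 h2
      simp only [subfs, List.mem_cons, List.not_mem_nil, or_false] at h2
      subst h2
      simpa [subfs] using h1
  | atom a =>
      intro β α h1 h2
      simp only [subfs, List.mem_cons, List.not_mem_nil, or_false] at h2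
      subst h2
      simpa [subfs] using h1
  | natom a =>
      intro β α h1 h2
      simp only [subfs, List.mem_cons, List.not_mem_nil, or_false] at h2
      subst h2
      simpa [subfs] using h1

/-- size of a formula -/
def fsize : LTL Ap → ℕ
  | .and a b => fsize a + fsize b + 1
  | .or a b => fsize a + fsize b + 1
  | .next a => fsize a + 1
  | .fut a => fsize a + 1
  | .glob a => fsize a + 1
  | .untl a b => fsize a + fsize b + 1
  | _ => 1

lemma fsize_le_of_mem_subfs : ∀ β : LTL Ap, ∀ {α : LTL Ap}, α ∈ subfs β → fsize α ≤ fsize β := by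
  intro β
  induction β with
  | and β₁ β₂ ih₁ ih₂ =>
      intro α h
      simp only [subfs, List.mem_cons, List.mem_append] at h
      rcases h with rfl | h | h
      · exact le_refl _
      · have := ih₁ h; simp only [fsize]; omega
      · have := ih₂ h; simp only [fsize]; omega
  | or β₁ β₂ ih₁ ih₂ =>
      intro α h
      simp only [subfs, List.mem_cons, List.mem_append] at h
      rcases h with rfl | h | h
      · exact le_refl _
      · have := ih₁ h; simp only [fsize]; omega
      · have := ih₂ h; simp only [fsize]; omega
  | untl β₁ β₂ ih₁ ih₂ =>
      intro α h
      simp only [subfs, List.mem_cons, List.mem_append] at h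
      rcases h with rfl | h | h
      · exact le_refl _
      · have := ih₁ h; simp only [fsize]; omega
      · have := ih₂ h; simp only [fsize]; omega
  | next β₁ ih =>
      intro α h
      simp only [subfs, List.mem_cons] at h
      rcases h with rfl | h
      · exact le_refl _
      · have := ih h; simp only [fsize]; omega
  | fut β₁ ih =>
      intro α h
      simp only [subfs, List.mem_cons] at h
      rcases h with rfl | h
      · exact le_refl _
      · have := ih h; simp only [fsize]; omega
  | glob β₁ ih =>
      intro α h
      simp only [subfs, List.mem_cons] at h
      rcases h with rfl | h
      · exact le_refl _
      · have := ih h; simp only [fsize]; omega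
  | tt =>
      intro α h
      simp only [subfs, List.mem_cons, List.not_mem_nil, or_false] at h
      subst h
      exact le_refl _
  | ff =>
      intro α h
      simp only [subfs, List.mem_cons, List.not_mem_nil, or_false] at h
      subst h
      exact le_refl _
  | atom a =>
      intro α h
      simp only [subfs, List.mem_cons, List.not_mem_nil, or_false] at h
      subst h
      exact le_refl _
  | natom a =>
      intro α h
      simp only [subfs, List.mem_cons, List.not_mem_nil, or_false] at h
      subst h
      exact le_refl _

end Aux3

section
variable {Ap : Type}
lemma fsize_pos (χ : LTL Ap) : 1 ≤ fsize χ := by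
  cases χ <;> simp only [fsize] <;> omega
end

section Aux4
variable {Ap : Type}

/-! ### ind lemmas -/

lemma sat_glob_mono {w : Word Ap} {ρ : LTL Ap} {j j' : ℕ} (h : Sat (.glob ρ) (suffix w j))
    (hle : j ≤ j') : Sat (.glob ρ) (suffix w j') := by
  intro k
  have h2 := h (k + j' - j)
  rw [suffix_suffix] at h2 ⊢
  have e : k + j' = k + j' - j + j := by omega
  rw [e]
  exact h2

lemma ind_spec {w : Word Ap} {ρ : LTL Ap} (h : Sat (.fut (.glob ρ)) w) :
    Sat (.glob ρ) (suffix w (ind w ρ)) := by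
  obtain ⟨k, hk⟩ := h
  exact Nat.sInf_mem (⟨k, hk⟩ : {j | Sat (.glob ρ) (suffix w j)}.Nonempty)

lemma ind_le {w : Word Ap} {ρ : LTL Ap} {j : ℕ} (h : Sat (.glob ρ) (suffix w j)) :
    ind w ρ ≤ j := Nat.sInf_le h

/-! ### hypothesis bundles -/

def Hpos (w : Word Ap) (φ : LTL Ap) (v : LTL Ap → Prop) (i : ℕ) : Prop :=
  ∀ ψ : LTL Ap, GSub φ ψ → Sat (LTL.fut (LTL.glob ψ)) w →
    propSat v (LTL.glob ψ) ∧
      ∀ j : ℕ, ind w ψ ≤ j → j ≤ i → propSat v (afGw ψ (infixW w j i))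

def Hneg (w : Word Ap) (φ : LTL Ap) (v : LTL Ap → Prop) : Prop :=
  ∀ ψ : LTL Ap, GSub φ ψ → ¬ Sat (LTL.fut (LTL.glob ψ)) w → ¬ propSat v (LTL.glob ψ)

lemma Hpos_mono {w : Word Ap} {α β : LTL Ap} {v : LTL Ap → Prop} {i : ℕ}
    (hm : β ∈ subfs α) (h : Hpos w α v i) : Hpos w β v i :=
  fun ψ hg => h ψ (subfs_trans α hg hm)

lemma Hneg_mono {w : Word Ap} {α β : LTL Ap} {v : LTL Ap → Prop}
    (hm : β ∈ subfs α) (h : Hneg w α v) : Hneg w β v :=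
  fun ψ hg => h ψ (subfs_trans α hg hm)

/-! ### combining finitely many thresholds -/

lemma exists_bound_forall_mem {α : Type*} (L : List α) (R : α → ℕ → Prop)
    (h : ∀ a ∈ L, ∃ N, ∀ i ≥ N, R a i) : ∃ N, ∀ i ≥ N, ∀ a ∈ L, R a i := by
  induction L with
  | nil => exact ⟨0, fun i _ a ha => absurd ha List.not_mem_nil⟩
  | cons b L ih =>
      obtain ⟨N1, hN1⟩ := h b List.mem_cons_self
      obtain ⟨N2, hN2⟩ := ih (fun a ha => h a (List.mem_cons_of_mem b ha))
      refine ⟨max N1 N2, fun i hi a ha => ?_⟩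
      rcases List.mem_cons.1 ha with rfl | ha
      · exact hN1 i (le_trans (le_max_left _ _) hi)
      · exact hN2 i (le_trans (le_max_right _ _) hi) a ha

/-- bound on `ind` over the `G`-subformulas occurring in a list -/
lemma exists_ind_bound (w : Word Ap) (L : List (LTL Ap)) :
    ∃ B, ∀ ρ : LTL Ap, (.glob ρ) ∈ L → ind w ρ ≤ B := by
  induction L with
  | nil => exact ⟨0, fun ρ h => absurd h List.not_mem_nil⟩
  | cons b L ih =>
      obtain ⟨B, hB⟩ := ih
      by_cases hb : ∃ ρ₀ : LTL Ap, b = LTL.glob ρ₀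
      · obtain ⟨ρ₀, rfl⟩ := hb
        refine ⟨max B (ind w ρ₀), fun ρ h => ?_⟩
        rcases List.mem_cons.1 h with he | h
        · obtain rfl : ρ = ρ₀ := by injection he
          exact le_max_right _ _
        · exact le_trans (hB ρ h) (le_max_left _ _)
      · refine ⟨B, fun ρ h => ?_⟩
        rcases List.mem_cons.1 h with he | h
        · exact absurd ⟨ρ, he.symm⟩ hb
        · exact hB ρ h

end Aux4

section Aux5
variable {Ap : Type} {w : Word Ap} {v : LTL Ap → Prop} {i : ℕ}

lemma propSat_afw_fut_hit {σ : LTL Ap} {m : ℕ} (h : m ≤ i)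
    (hs : propSat v (afw σ (infixW w m i))) :
    propSat v (afw (.fut σ) (infixW w m i)) := by
  rw [infixW_cons w h] at hs ⊢
  rw [afw_cons]
  show propSat v (afw (.or (af σ (w m)) (.fut σ)) (infixW w (m+1) i))
  rw [afw_or]
  exact Or.inl hs

lemma propSat_afw_fut_skip {σ : LTL Ap} {m : ℕ} (h : m ≤ i)
    (hs : propSat v (afw (.fut σ) (infixW w (m+1) i))) :
    propSat v (afw (.fut σ) (infixW w m i)) := by
  rw [infixW_cons w h, afw_cons]
  show propSat v (afw (.or (af σ (w m)) (.fut σ)) (infixW w (m+1) i))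
  rw [afw_or]
  exact Or.inr hs

lemma propSat_afw_fut_of {σ : LTL Ap} : ∀ (d m : ℕ), m + d ≤ i →
    propSat v (afw σ (infixW w (m + d) i)) →
    propSat v (afw (.fut σ) (infixW w m i)) := by
  intro d
  induction d with
  | zero => intro m h hs; exact propSat_afw_fut_hit (by omega) hs
  | succ d ih =>
      intro m h hs
      apply propSat_afw_fut_skip (by omega)
      apply ih (m + 1) (by omega)
      have e : m + 1 + d = m + (d + 1) := by omega
      rw [e]
      exact hs

lemma propSat_afw_untl_hit {σ τ : LTL Ap} {m : ℕ} (h : m ≤ i)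
    (hs : propSat v (afw τ (infixW w m i))) :
    propSat v (afw (.untl σ τ) (infixW w m i)) := by
  rw [infixW_cons w h] at hs ⊢
  rw [afw_cons]
  show propSat v (afw (.or (af τ (w m)) (.and (af σ (w m)) (.untl σ τ))) (infixW w (m+1) i))
  rw [afw_or]
  exact Or.inl hs

lemma propSat_afw_untl_step {σ τ : LTL Ap} {m : ℕ} (h : m ≤ i)
    (hs : propSat v (afw σ (infixW w m i)))
    (hu : propSat v (afw (.untl σ τ) (infixW w (m+1) i))) :
    propSat v (afw (.untl σ τ) (infixW w m i)) := by
  rw [infixW_cons w h] at hs ⊢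
  rw [afw_cons]
  show propSat v (afw (.or (af τ (w m)) (.and (af σ (w m)) (.untl σ τ))) (infixW w (m+1) i))
  rw [afw_or, afw_and]
  exact Or.inr ⟨hs, hu⟩

lemma propSat_afw_untl_of {σ τ : LTL Ap} : ∀ (d m : ℕ), m + d ≤ i →
    propSat v (afw τ (infixW w (m + d) i)) →
    (∀ j < d, propSat v (afw σ (infixW w (m + j) i))) →
    propSat v (afw (.untl σ τ) (infixW w m i)) := by
  intro d
  induction d with
  | zero => intro m h hτ _; exact propSat_afw_untl_hit (by omega) hτ
  | succ d ih =>
      intro m h hτ hσ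
      apply propSat_afw_untl_step (by omega)
      · simpa using hσ 0 (by omega)
      · apply ih (m + 1) (by omega)
        · have e : m + 1 + d = m + (d + 1) := by omega
          rw [e]; exact hτ
        · intro j hj
          have e : m + 1 + j = m + (j + 1) := by omega
          rw [e]; exact hσ (j + 1) (by omega)

lemma propSat_afw_glob_of {σ : LTL Ap} : ∀ (n m : ℕ), i + 1 - m ≤ n →
    propSat v (.glob σ) →
    (∀ m', m ≤ m' → m' ≤ i → propSat v (afw σ (infixW w m' i))) →
    propSat v (afw (.glob σ) (infixW w m i)) := by
  intro n
  induction n with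
  | zero =>
      intro m hn hg _
      rw [infixW_empty w (by omega), afw_nil]
      exact hg
  | succ n ih =>
      intro m hn hg hp
      by_cases hm : m ≤ i
      · rw [infixW_cons w hm, afw_cons]
        show propSat v (afw (.and (af σ (w m)) (.glob σ)) (infixW w (m+1) i))
        rw [afw_and]
        constructor
        · have := hp m (le_refl m) hm
          rw [infixW_cons w hm, afw_cons] at this
          exact this
        · exact ih (m + 1) (by omega) hg (fun m' h1 h2 => hp m' (by omega) h2)
      · rw [infixW_empty w (by omega), afw_nil]
        exact hg

end Aux5

section Bridge
variable {Ap : Type}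

lemma mem_subfs_and_left (α β : LTL Ap) : α ∈ subfs (LTL.and α β) := by
  simp [subfs, mem_subfs_self]
lemma mem_subfs_and_right (α β : LTL Ap) : β ∈ subfs (LTL.and α β) := by
  simp [subfs, mem_subfs_self]
lemma mem_subfs_or_left (α β : LTL Ap) : α ∈ subfs (LTL.or α β) := by
  simp [subfs, mem_subfs_self]
lemma mem_subfs_or_right (α β : LTL Ap) : β ∈ subfs (LTL.or α β) := by
  simp [subfs, mem_subfs_self]
lemma mem_subfs_next (σ : LTL Ap) : σ ∈ subfs (LTL.next σ) := by
  simp [subfs, mem_subfs_self]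
lemma mem_subfs_fut (σ : LTL Ap) : σ ∈ subfs (LTL.fut σ) := by
  simp [subfs, mem_subfs_self]
lemma mem_subfs_glob (σ : LTL Ap) : σ ∈ subfs (LTL.glob σ) := by
  simp [subfs, mem_subfs_self]
lemma mem_subfs_untl_left (α β : LTL Ap) : α ∈ subfs (LTL.untl α β) := by
  simp [subfs, mem_subfs_self]
lemma mem_subfs_untl_right (α β : LTL Ap) : β ∈ subfs (LTL.untl α β) := by
  simp [subfs, mem_subfs_self]

lemma GSub_glob_self (σ : LTL Ap) : GSub (LTL.glob σ) σ := by
  show _ ∈ subfs (LTL.glob σ)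
  exact mem_subfs_self _

lemma bridge {w : Word Ap} {v : LTL Ap → Prop} {i : ℕ} :
    ∀ n : ℕ, ∀ χ : LTL Ap, ∀ m : ℕ, i + 1 - m ≤ n →
    (∀ ρ : LTL Ap, GSub χ ρ → propSat v (.glob ρ) →
      ∀ m', m ≤ m' → m' ≤ i → propSat v (afw ρ (infixW w m' i))) →
    propSat v (afGw χ (infixW w m i)) → propSat v (afw χ (infixW w m i)) := by
  intro n
  induction n with
  | zero =>
      intro χ m hn corr hG
      rw [infixW_empty w (by omega)] at hG ⊢
      exact hG
  | succ n ih =>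
      intro χ m hn
      by_cases hm : m ≤ i
      · induction χ with
        | tt => intro corr hG; rw [afw_tt]; exact trivial
        | ff => intro corr hG; rw [afGw_ff] at hG; exact hG.elim
        | atom a =>
            intro corr hG
            rw [infixW_cons w hm, afGw_cons] at hG
            rw [infixW_cons w hm, afw_cons]
            simp only [afG] at hG
            simp only [af]
            by_cases h : a ∈ w m
            · rw [if_pos h] at hG ⊢; rw [afw_tt]; exact trivial
            · rw [if_neg h] at hG; rw [afGw_ff] at hG; exact hG.elim
        | natom a =>
            intro corr hG
            rw [infixW_cons w hm, afGw_cons] at hG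
            rw [infixW_cons w hm, afw_cons]
            simp only [afG] at hG
            simp only [af]
            by_cases h : a ∈ w m
            · rw [if_pos h] at hG; rw [afGw_ff] at hG; exact hG.elim
            · rw [if_neg h] at hG ⊢; rw [afw_tt]; exact trivial
        | and α β ihα ihβ =>
            intro corr hG
            rw [afGw_and] at hG
            rw [afw_and]
            refine ⟨ihα (fun ρ hρ => corr ρ (subfs_trans _ hρ (mem_subfs_and_left α β))) hG.1,
              ihβ (fun ρ hρ => corr ρ (subfs_trans _ hρ (mem_subfs_and_right α β))) hG.2⟩
        | or α β ihα ihβ =>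
            intro corr hG
            rw [afGw_or] at hG
            rw [afw_or]
            rcases hG with hG | hG
            · exact Or.inl (ihα (fun ρ hρ => corr ρ (subfs_trans _ hρ (mem_subfs_or_left α β))) hG)
            · exact Or.inr (ihβ (fun ρ hρ => corr ρ (subfs_trans _ hρ (mem_subfs_or_right α β))) hG)
        | next σ ihσ =>
            intro corr hG
            rw [infixW_cons w hm, afGw_cons] at hG
            rw [infixW_cons w hm, afw_cons]
            simp only [afG] at hG
            simp only [af]
            exact ih σ (m + 1) (by omega)
              (fun ρ hρ hv m' h1 h2 =>
                corr ρ (subfs_trans _ hρ (mem_subfs_next σ)) hv m' (by omega) h2) hG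
        | fut σ ihσ =>
            intro corr hG
            rw [infixW_cons w hm, afGw_cons] at hG
            simp only [afG] at hG
            rw [afGw_or] at hG
            rcases hG with hG | hG
            · have hG' : propSat v (afGw σ (infixW w m i)) := by
                rw [infixW_cons w hm, afGw_cons]; exact hG
              have := ihσ (fun ρ hρ => corr ρ (subfs_trans _ hρ (mem_subfs_fut σ))) hG'
              exact propSat_afw_fut_hit hm this
            · have := ih (.fut σ) (m + 1) (by omega)
                (fun ρ hρ hv m' h1 h2 => corr ρ hρ hv m' (by omega) h2) hG
              exact propSat_afw_fut_skip hm this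
        | glob σ ihσ =>
            intro corr hG
            rw [afGw_glob] at hG
            exact propSat_afw_glob_of (i + 1) m (by omega) hG
              (fun m' h1 h2 => corr σ (GSub_glob_self σ) hG m' h1 h2)
        | untl σ τ ihσ ihτ =>
            intro corr hG
            rw [infixW_cons w hm, afGw_cons] at hG
            simp only [afG] at hG
            rw [afGw_or, afGw_and] at hG
            rcases hG with hG | ⟨hG1, hG2⟩
            · have hG' : propSat v (afGw τ (infixW w m i)) := by
                rw [infixW_cons w hm, afGw_cons]; exact hG
              have := ihτ (fun ρ hρ => corr ρ (subfs_trans _ hρ (mem_subfs_untl_right σ τ))) hG'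
              exact propSat_afw_untl_hit hm this
            · have h1' : propSat v (afGw σ (infixW w m i)) := by
                rw [infixW_cons w hm, afGw_cons]; exact hG1
              have hσ := ihσ (fun ρ hρ => corr ρ (subfs_trans _ hρ (mem_subfs_untl_left σ τ))) h1'
              have hu := ih (.untl σ τ) (m + 1) (by omega)
                (fun ρ hρ hv m' hm1 hm2 => corr ρ hρ hv m' (by omega) hm2) hG2
              exact propSat_afw_untl_step hm hσ hu
      · intro corr hG
        rw [infixW_empty w (by omega)] at hG ⊢
        exact hG

end Bridge

section Main
variable {Ap : Type}

lemma main_lemma {w : Word Ap} : ∀ n : ℕ,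
    (∀ ψ : LTL Ap, 2 * fsize ψ ≤ n → ∀ m : ℕ, Sat ψ (suffix w m) →
      ∃ N, ∀ i ≥ N, ∀ v : LTL Ap → Prop, LitConsistent v → Hpos w ψ v i → Hneg w ψ v →
        propSat v (afw ψ (infixW w m i))) ∧
    (∀ ψ : LTL Ap, 2 * fsize ψ + 1 ≤ n → ∀ j : ℕ, Sat (.glob ψ) (suffix w j) →
      ∃ N, ∀ i ≥ N, ∀ v : LTL Ap → Prop, LitConsistent v →
        Hpos w (.glob ψ) v i → Hneg w (.glob ψ) v →
        ∀ m, j ≤ m → m ≤ i → propSat v (afw ψ (infixW w m i))) := by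
  intro n
  induction n using Nat.strong_induction_on with
  | _ n ih =>
  constructor
  · -- SEM part
    intro ψ hsz m hs
    cases ψ with
    | tt =>
        exact ⟨0, fun i _ v _ _ _ => by rw [afw_tt]; trivial⟩
    | ff => exact hs.elim
    | atom a =>
        have ha : a ∈ w m := by simpa [Sat, suffix] using hs
        refine ⟨m, fun i hi v _ _ _ => ?_⟩
        rw [infixW_cons w hi, afw_cons]
        simp only [af]
        rw [if_pos ha, afw_tt]
        trivial
    | natom a =>
        have ha : a ∉ w m := by simpa [Sat, suffix] using hs
        refine ⟨m, fun i hi v _ _ _ => ?_⟩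
        rw [infixW_cons w hi, afw_cons]
        simp only [af]
        rw [if_neg ha, afw_tt]
        trivial
    | and α β =>
        obtain ⟨h1, h2⟩ := hs
        simp only [fsize] at hsz
        have hpα := fsize_pos α
        have hpβ := fsize_pos β
        obtain ⟨N1, hN1⟩ := (ih (2 * fsize α) (by omega)).1 α (le_refl _) m h1
        obtain ⟨N2, hN2⟩ := (ih (2 * fsize β) (by omega)).1 β (le_refl _) m h2
        refine ⟨max N1 N2, fun i hi v lc hp hn => ?_⟩
        rw [afw_and]
        exact ⟨hN1 i (le_trans (le_max_left _ _) hi) v lc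
            (Hpos_mono (mem_subfs_and_left α β) hp) (Hneg_mono (mem_subfs_and_left α β) hn),
          hN2 i (le_trans (le_max_right _ _) hi) v lc
            (Hpos_mono (mem_subfs_and_right α β) hp) (Hneg_mono (mem_subfs_and_right α β) hn)⟩
    | or α β =>
        simp only [fsize] at hsz
        have hpα := fsize_pos α
        have hpβ := fsize_pos β
        rcases hs with h | h
        · obtain ⟨N1, hN1⟩ := (ih (2 * fsize α) (by omega)).1 α (le_refl _) m h
          refine ⟨N1, fun i hi v lc hp hn => ?_⟩
          rw [afw_or]
          exact Or.inl (hN1 i hi v lc (Hpos_mono (mem_subfs_or_left α β) hp)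
            (Hneg_mono (mem_subfs_or_left α β) hn))
        · obtain ⟨N1, hN1⟩ := (ih (2 * fsize β) (by omega)).1 β (le_refl _) m h
          refine ⟨N1, fun i hi v lc hp hn => ?_⟩
          rw [afw_or]
          exact Or.inr (hN1 i hi v lc (Hpos_mono (mem_subfs_or_right α β) hp)
            (Hneg_mono (mem_subfs_or_right α β) hn))
    | next σ =>
        simp only [fsize] at hsz
        have hs' : Sat σ (suffix w (1 + m)) := by
          have := hs
          show Sat σ _
          rw [← suffix_suffix w m 1]
          exact this
        obtain ⟨N1, hN1⟩ := (ih (2 * fsize σ) (by omega)).1 σ (le_refl _) (1 + m) hs'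
        refine ⟨max N1 m, fun i hi v lc hp hn => ?_⟩
        have hm : m ≤ i := le_trans (le_max_right _ _) hi
        rw [infixW_cons w hm, afw_cons]
        simp only [af]
        have := hN1 i (le_trans (le_max_left _ _) hi) v lc
          (Hpos_mono (mem_subfs_next σ) hp) (Hneg_mono (mem_subfs_next σ) hn)
        rwa [show 1 + m = m + 1 by omega] at this
    | fut σ =>
        simp only [fsize] at hsz
        obtain ⟨k, hk⟩ := hs
        rw [suffix_suffix] at hk
        obtain ⟨N1, hN1⟩ := (ih (2 * fsize σ) (by omega)).1 σ (le_refl _) (k + m) hk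
        refine ⟨max N1 (m + k), fun i hi v lc hp hn => ?_⟩
        apply propSat_afw_fut_of k m (le_trans (le_max_right _ _) hi)
        have := hN1 i (le_trans (le_max_left _ _) hi) v lc
          (Hpos_mono (mem_subfs_fut σ) hp) (Hneg_mono (mem_subfs_fut σ) hn)
        rwa [show k + m = m + k by omega] at this
    | untl σ τ =>
        simp only [fsize] at hsz
        have hpσ := fsize_pos σ
        have hpτ := fsize_pos τ
        obtain ⟨k, hk, hj⟩ := hs
        rw [suffix_suffix] at hk
        obtain ⟨Nτ, hNτ⟩ := (ih (2 * fsize τ) (by omega)).1 τ (le_refl _) (k + m) hk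
        have hcomb : ∃ Nσ, ∀ i ≥ Nσ, ∀ j' ∈ List.range k, ∀ v : LTL Ap → Prop,
            LitConsistent v → Hpos w (.untl σ τ) v i → Hneg w (.untl σ τ) v →
            propSat v (afw σ (infixW w (m + j') i)) := by
          apply exists_bound_forall_mem
          intro j' hj'
          have hjk : j' < k := List.mem_range.1 hj'
          have hsj : Sat σ (suffix w (j' + m)) := by
            have := hj j' hjk
            rwa [suffix_suffix] at this
          obtain ⟨N, hN⟩ := (ih (2 * fsize σ) (by omega)).1 σ (le_refl _) (j' + m) hsj
          refine ⟨N, fun i hi v lc hp hn => ?_⟩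
          have := hN i hi v lc (Hpos_mono (mem_subfs_untl_left σ τ) hp)
            (Hneg_mono (mem_subfs_untl_left σ τ) hn)
          rwa [show j' + m = m + j' by omega] at this
        obtain ⟨Nσ, hNσ⟩ := hcomb
        refine ⟨max (max Nτ Nσ) (m + k), fun i hi v lc hp hn => ?_⟩
        apply propSat_afw_untl_of k m (le_trans (le_max_right _ _) hi)
        · have := hNτ i (le_trans (le_trans (le_max_left _ _) (le_max_left _ _)) hi) v lc
            (Hpos_mono (mem_subfs_untl_right σ τ) hp) (Hneg_mono (mem_subfs_untl_right σ τ) hn)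
          rwa [show k + m = m + k by omega] at this
        · intro j' hjk
          exact hNσ i (le_trans (le_trans (le_max_right _ _) (le_max_left _ _)) hi) j'
            (List.mem_range.2 hjk) v lc hp hn
    | glob σ =>
        simp only [fsize] at hsz
        obtain ⟨N1, hP⟩ := (ih (2 * fsize σ + 1) (by omega)).2 σ (le_refl _) m hs
        refine ⟨max N1 m, fun i hi v lc hp hn => ?_⟩
        have hvG : propSat v (.glob σ) := (hp σ (GSub_glob_self σ) ⟨m, hs⟩).1
        exact propSat_afw_glob_of (i + 1) m (by omega) hvG
          (fun m' h1 h2 => hP i (le_trans (le_max_left _ _) hi) v lc hp hn m' h1 h2)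
  · -- P part
    intro ψ hsz j hs
    obtain ⟨B, hB⟩ := exists_ind_bound w (subfs ψ)
    have hψpos := fsize_pos ψ
    -- corrections from recursive P on strict G-subformulas
    have hcorr : ∃ N₁, ∀ i ≥ N₁, ∀ χ ∈ subfs ψ, ∀ v : LTL Ap → Prop, LitConsistent v →
        Hpos w (.glob ψ) v i → Hneg w (.glob ψ) v →
        ∀ ρ : LTL Ap, χ = LTL.glob ρ → Sat (.fut (.glob ρ)) w →
        ∀ m', ind w ρ ≤ m' → m' ≤ i → propSat v (afw ρ (infixW w m' i)) := by
      apply exists_bound_forall_mem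
      intro χ hχ
      by_cases hg : ∃ ρ : LTL Ap, χ = LTL.glob ρ ∧ Sat (.fut (.glob ρ)) w
      · obtain ⟨ρ, rfl, hFG⟩ := hg
        have hfle := fsize_le_of_mem_subfs ψ hχ
        simp only [fsize] at hfle
        have hsρ : Sat (.glob ρ) (suffix w (ind w ρ)) := ind_spec hFG
        obtain ⟨N, hN⟩ := (ih (2 * fsize ρ + 1) (by omega)).2 ρ (le_refl _) (ind w ρ) hsρ
        have hsubmem : (LTL.glob ρ) ∈ subfs (LTL.glob ψ) := by
          simp only [subfs, List.mem_cons]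
          exact Or.inr hχ
        refine ⟨N, fun i hi v lc hp hn ρ' heq hFG' m' h1 h2 => ?_⟩
        obtain rfl : ρ = ρ' := by injection heq
        exact hN i hi v lc (Hpos_mono hsubmem hp) (Hneg_mono hsubmem hn) m' h1 h2
      · exact ⟨0, fun i _ v _ _ _ ρ heq hFG _ _ _ => absurd ⟨ρ, heq, hFG⟩ hg⟩
    obtain ⟨N₁, hcorr⟩ := hcorr
    -- early positions, handled semantically
    have hearly : ∃ N₂, ∀ i ≥ N₂, ∀ m ∈ List.range (B + 1), ∀ v : LTL Ap → Prop,
        LitConsistent v → Hpos w (.glob ψ) v i → Hneg w (.glob ψ) v →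
        j ≤ m → propSat v (afw ψ (infixW w m i)) := by
      apply exists_bound_forall_mem
      intro m hm
      by_cases hjm : j ≤ m
      · have hsm : Sat ψ (suffix w m) := by
          have h0 := sat_glob_mono hs hjm 0
          rwa [suffix_zero] at h0
        obtain ⟨N, hN⟩ := (ih (2 * fsize ψ) (by omega)).1 ψ (le_refl _) m hsm
        exact ⟨N, fun i hi v lc hp hn _ => hN i hi v lc
          (Hpos_mono (mem_subfs_glob ψ) hp) (Hneg_mono (mem_subfs_glob ψ) hn)⟩
      · exact ⟨0, fun i _ v _ _ _ hjm' => absurd hjm' hjm⟩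
    obtain ⟨N₂, hearly⟩ := hearly
    refine ⟨max N₁ (max N₂ j), fun i hi v lc hp hn m hjm hmi => ?_⟩
    by_cases hmB : m ≤ B
    · exact hearly i (le_trans (le_trans (le_max_left _ _) (le_max_right _ _)) hi) m
        (List.mem_range.2 (by omega)) v lc hp hn hjm
    · have hFGψ : Sat (.fut (.glob ψ)) w := ⟨j, hs⟩
      have hψself : GSub (.glob ψ) ψ := GSub_glob_self ψ
      have hGside : propSat v (afGw ψ (infixW w m i)) :=
        (hp ψ hψself hFGψ).2 m (le_trans (ind_le hs) hjm) hmi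
      apply bridge (i + 1) ψ m (by omega) ?_ hGside
      intro ρ hρ hv m' h1 h2
      have hρmem : (LTL.glob ρ) ∈ subfs ψ := hρ
      have hρ' : GSub (.glob ψ) ρ := by
        show _ ∈ subfs (LTL.glob ψ)
        simp only [subfs, List.mem_cons]
        exact Or.inr hρmem
      have hFGρ : Sat (.fut (.glob ρ)) w := by
        by_contra hc
        exact hn ρ hρ' hc hv
      exact hcorr i (le_trans (le_max_left _ _) hi) (LTL.glob ρ) hρmem v lc hp hn ρ rfl hFGρ
        m' (by have := hB ρ hρmem; omega) h2

end Main

/-- `w ⊨ φ` iff for almost every `i`, the conjunction of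
`Gψ ∧ ⋀_{j=ind(w,ψ)}^i afG(ψ, w[j..i])` over `Gψ ∈ G` and of the atoms `¬Gψ`
for `Gψ ∈ GG(φ)\G` (encoded by forcing `v(Gψ)` false) propositionally implies
`af(φ, w[0..i])`, where `G = {Gψ ∈ GG(φ) | w ⊨ FGψ}`. -/
theorem master_correctness {Ap : Type} (φ : LTL Ap) (w : Word Ap) :
    Sat φ w ↔
      ∃ N : ℕ, ∀ i ≥ N, ∀ v : LTL Ap → Prop, LitConsistent v →
        (∀ ψ : LTL Ap, GSub φ ψ → Sat (LTL.fut (LTL.glob ψ)) w →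
          propSat v (LTL.glob ψ) ∧
            ∀ j : ℕ, ind w ψ ≤ j → j ≤ i → propSat v (afGw ψ (infixW w j i))) →
        (∀ ψ : LTL Ap, GSub φ ψ → ¬ Sat (LTL.fut (LTL.glob ψ)) w →
          ¬ propSat v (LTL.glob ψ)) →
        propSat v (afw φ (prefixW w i)) := by


  constructor
  · intro hs
    have hs0 : Sat φ (suffix w 0) := by rwa [suffix_zero]
    obtain ⟨N, hN⟩ := (main_lemma (w := w) (2 * fsize φ)).1 φ (le_refl _) 0 hs0
    exact ⟨N, fun i hi v lc h1 h2 => hN i hi v lc h1 h2⟩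
  · rintro ⟨N, h⟩
    obtain ⟨B, hB⟩ := exists_ind_bound w (subfs φ)
    set i := max N B with hidef
    set v : LTL Ap → Prop := fun χ => Sat χ (suffix w (i + 1)) with hv
    have lc : LitConsistent v := by
      intro a
      show Sat (LTL.atom a) _ ↔ ¬ Sat (LTL.natom a) _
      simp [Sat]
    have h1 : ∀ ψ : LTL Ap, GSub φ ψ → Sat (LTL.fut (LTL.glob ψ)) w →
        propSat v (LTL.glob ψ) ∧
          ∀ j : ℕ, ind w ψ ≤ j → j ≤ i → propSat v (afGw ψ (infixW w j i)) := by
      intro ρ hρ hFG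
      have hind : ind w ρ ≤ B := hB ρ hρ
      constructor
      · show Sat (LTL.glob ρ) (suffix w (i + 1))
        exact sat_glob_mono (ind_spec hFG) (by omega)
      · intro j hj hji
        have hsj : Sat ρ (suffix w j) := by
          have := sat_glob_mono (ind_spec hFG) hj 0
          rwa [suffix_zero] at this
        have hcat : Sat ρ (cat (infixW w j i) (suffix w (i + 1))) := by
          rwa [cat_infixW_suffix w (by omega)]
        exact (propSat_sat (suffix w (i + 1)) _).2 (afGw_sem_fwd _ _ _ hcat)
    have h2 : ∀ ψ : LTL Ap, GSub φ ψ → ¬ Sat (LTL.fut (LTL.glob ψ)) w →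
        ¬ propSat v (LTL.glob ψ) := by
      intro ρ _ hnFG hc
      exact hnFG ⟨i + 1, hc⟩
    have hc := h i (le_max_left _ _) v lc h1 h2
    have hsat : Sat (afw φ (prefixW w i)) (suffix w (i + 1)) :=
      (propSat_sat (suffix w (i + 1)) _).1 hc
    rw [afw_sem] at hsat
    show Sat φ w
    have : cat (prefixW w i) (suffix w (i + 1)) = w := by
      show cat (infixW w 0 i) (suffix w (i + 1)) = w
      rw [cat_infixW_suffix w (by omega), suffix_zero]
    rwa [this] at hsat

end LTLF
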